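/- Let n ≥ 2, let Ω ⊆ ℝ^n be a smooth bounded domain, let C₂ > 0 and let 1 < q < n. Then there exists a constant C = C(n, q, Ω, C₂) < ∞ such that every nonnegative weak solution u ∈ A(Ω) of −Δ_n u = λ e^{u} in Ω with λ > 0 and λ ∫_Ω e^{u} dx ≤ C₂ satisfies ∫_Ω |∇u|^q dx ≤ C. -/

import Mathlib

open MeasureTheory Metric Set Filter Topology

noncomputable section

/-- `ω_{n-1}`: the surface measure of the unit sphere in `ℝ^n`, i.e. `n · vol(B^n)`. -/
def surf (n : ℕ) : ℝ :=
  n * (volume (ball (0 : EuclideanSpace ℝ (Fin n)) 1)).toReal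

/-- `α_n = n ω_{n-1}^{1/(n-1)}`. -/
def alphaN (n : ℕ) : ℝ := n * surf n ^ ((1 : ℝ) / ((n : ℝ) - 1))

/-- `C_n = (n²/(n-1))^{n-1} ω_{n-1}`. -/
def CN (n : ℕ) : ℝ := (((n : ℝ) ^ 2) / ((n : ℝ) - 1)) ^ ((n : ℝ) - 1) * surf n

/-- `β_n = n (n²/(n-1))^{n-1}`. -/
def betaN (n : ℕ) : ℝ := n * (((n : ℝ) ^ 2) / ((n : ℝ) - 1)) ^ ((n : ℝ) - 1)

/-- `η₀(x) = ln(β_n / (1+|x|^{n/(n-1)})^n)`. -/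
def eta0 (n : ℕ) (x : EuclideanSpace ℝ (Fin n)) : ℝ :=
  Real.log (betaN n / (1 + ‖x‖ ^ ((n : ℝ) / ((n : ℝ) - 1))) ^ (n : ℝ))

/-- The class `A(Ω)`: continuous on `closure Ω`, C¹ in `Ω`, vanishing on `∂Ω`,
with finite `n`-Dirichlet energy. -/
structure MemA (n : ℕ) (Ω : Set (EuclideanSpace ℝ (Fin n)))
    (u : EuclideanSpace ℝ (Fin n) → ℝ) : Prop where
  contOn : ContinuousOn u (closure Ω)
  diff : ∀ x ∈ Ω, DifferentiableAt ℝ u x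
  gradCont : ContinuousOn (gradient u) Ω
  boundary : ∀ x ∈ frontier Ω, u x = 0
  energy : IntegrableOn (fun x => ‖gradient u x‖ ^ (n : ℝ)) Ω volume

/-- `u` is a weak solution of `-Δ_n u = f` in `Ω`. -/
def IsWeakSol (n : ℕ) (Ω : Set (EuclideanSpace ℝ (Fin n)))
    (u f : EuclideanSpace ℝ (Fin n) → ℝ) : Prop :=
  ∀ φ : EuclideanSpace ℝ (Fin n) → ℝ, ContDiff ℝ 1 φ → HasCompactSupport φ →
    tsupport φ ⊆ Ω →
    (∫ x in Ω, ‖gradient u x‖ ^ ((n : ℝ) - 2) * (inner ℝ (gradient u x) (gradient φ x) : ℝ)) =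
      ∫ x in Ω, f x * φ x

/-- `x` is a blow-up point of the sequence `u`: for every `r>0`,
`limsup_k sup_{B(x,r) ∩ Ω} u_k = +∞`. -/
def IsBlowUpPt (n : ℕ) (Ω : Set (EuclideanSpace ℝ (Fin n)))
    (u : ℕ → EuclideanSpace ℝ (Fin n) → ℝ) (x : EuclideanSpace ℝ (Fin n)) : Prop :=
  ∀ r > 0, ∀ M : ℝ, ∀ K : ℕ, ∃ k ≥ K, ∃ y ∈ ball x r ∩ Ω, M < u k y

/-- `J_ρ(u) = (1/(nρ)) ∫_Ω |∇u|^n - ln ∫_Ω e^u`. -/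
def Jfun (n : ℕ) (Ω : Set (EuclideanSpace ℝ (Fin n))) (ρ : ℝ)
    (u : EuclideanSpace ℝ (Fin n) → ℝ) : ℝ :=
  (1 / (n * ρ)) * ∫ x in Ω, ‖gradient u x‖ ^ (n : ℝ) -
    Real.log (∫ x in Ω, Real.exp (u x))

open intervalIntegral
open scoped NNReal ENNReal

/-- smooth bump derivative profile: `1` on `[a,t]`, `0` off `[a/2, t+1]`, in `[0,1]`. -/
def gcut (a t s : ℝ) : ℝ :=
  Real.smoothTransition ((2*s - a) / a) * Real.smoothTransition (t + 1 - s)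

lemma gcut_continuous (a t : ℝ) : Continuous (gcut a t) := by
  exact (Real.smoothTransition.continuous.comp (by fun_prop)).mul
    (Real.smoothTransition.continuous.comp (by fun_prop))

lemma gcut_nonneg (a t s : ℝ) : 0 ≤ gcut a t s :=
  mul_nonneg (Real.smoothTransition.nonneg _) (Real.smoothTransition.nonneg _)

lemma gcut_le_one (a t s : ℝ) : gcut a t s ≤ 1 :=
  mul_le_one₀ (Real.smoothTransition.le_one _) (Real.smoothTransition.nonneg _)
    (Real.smoothTransition.le_one _)

lemma gcut_eq_zero_left (a t s : ℝ) (ha : 0 < a) (hs : s ≤ a/2) : gcut a t s = 0 := by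
  have : (2*s - a) / a ≤ 0 := div_nonpos_of_nonpos_of_nonneg (by linarith) ha.le
  simp [gcut, Real.smoothTransition.zero_of_nonpos this]

lemma gcut_eq_zero_right (a t s : ℝ) (hs : t + 1 ≤ s) : gcut a t s = 0 := by
  have : t + 1 - s ≤ 0 := by linarith
  simp [gcut, Real.smoothTransition.zero_of_nonpos this]

lemma gcut_eq_one (a t s : ℝ) (ha : 0 < a) (has : a ≤ s) (hst : s ≤ t) : gcut a t s = 1 := by
  have h1 : (1:ℝ) ≤ (2*s - a) / a := (le_div_iff₀ ha).2 (by linarith)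
  have h2 : (1:ℝ) ≤ t + 1 - s := by linarith
  simp [gcut, Real.smoothTransition.one_of_one_le h1, Real.smoothTransition.one_of_one_le h2]

/-- `Fcut a t s = ∫_0^s gcut`. A C¹ approximation of `s ↦ min ((s-a)⁺, t-a)`. -/
def Fcut (a t s : ℝ) : ℝ := ∫ τ in (0:ℝ)..s, gcut a t τ

lemma Fcut_hasDerivAt (a t s : ℝ) : HasDerivAt (Fcut a t) (gcut a t s) s :=
  intervalIntegral.integral_hasDerivAt_right
    ((gcut_continuous a t).intervalIntegrable (μ := volume) _ _)
    ((gcut_continuous a t).stronglyMeasurableAtFilter _ _)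
    (gcut_continuous a t).continuousAt

lemma Fcut_deriv (a t : ℝ) : deriv (Fcut a t) = gcut a t :=
  funext fun s => (Fcut_hasDerivAt a t s).deriv

lemma Fcut_contDiff (a t : ℝ) : ContDiff ℝ 1 (Fcut a t) := by
  rw [contDiff_one_iff_deriv]
  exact ⟨fun s => (Fcut_hasDerivAt a t s).differentiableAt, by
    rw [Fcut_deriv]; exact gcut_continuous a t⟩

lemma Fcut_mono (a t : ℝ) : Monotone (Fcut a t) := by
  intro s₁ s₂ h
  have := intervalIntegral.integral_add_adjacent_intervals (a := (0:ℝ)) (b := s₁) (c := s₂)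
    ((gcut_continuous a t).intervalIntegrable (μ := volume) _ _) ((gcut_continuous a t).intervalIntegrable (μ := volume) _ _)
  have hnn : 0 ≤ ∫ τ in s₁..s₂, gcut a t τ :=
    intervalIntegral.integral_nonneg h (fun x _ => gcut_nonneg a t x)
  unfold Fcut
  linarith [this]

lemma Fcut_eq_zero (a t s : ℝ) (ha : 0 < a) (hs : s ≤ a/2) : Fcut a t s = 0 := by
  unfold Fcut
  rw [intervalIntegral.integral_congr (g := fun _ => (0:ℝ)), intervalIntegral.integral_zero]
  intro τ hτ
  rw [Set.uIcc_eq_union] at hτ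
  have : τ ≤ a/2 := by
    rcases hτ with h | h
    · exact h.2.trans hs
    · exact h.2.trans (by linarith)
  exact gcut_eq_zero_left a t τ ha this

lemma Fcut_nonneg (a t s : ℝ) (ha : 0 < a) : 0 ≤ Fcut a t s := by
  rcases le_or_gt s 0 with h | h
  · rw [Fcut_eq_zero a t s ha (h.trans (by linarith))]
  · exact intervalIntegral.integral_nonneg h.le (fun x _ => gcut_nonneg a t x)

lemma Fcut_le (a t s : ℝ) (ha : 0 < a) (hat : 0 ≤ t) : Fcut a t s ≤ t + 1 := by
  have key : ∀ s', 0 ≤ s' → s' ≤ t + 1 → Fcut a t s' ≤ t + 1 := by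
    intro s' h0 h1
    calc Fcut a t s' ≤ ∫ τ in (0:ℝ)..s', (1:ℝ) :=
          intervalIntegral.integral_mono_on h0 ((gcut_continuous a t).intervalIntegrable (μ := volume) _ _)
            (intervalIntegrable_const (μ := volume)) (fun x _ => gcut_le_one a t x)
      _ = s' := by simp
      _ ≤ t + 1 := h1
  rcases le_or_gt s 0 with h | h
  · rw [Fcut_eq_zero a t s ha (h.trans (by linarith))]; linarith
  rcases le_or_gt s (t+1) with h2 | h2
  · exact key s h.le h2
  · have hsplit := intervalIntegral.integral_add_adjacent_intervals (a := (0:ℝ)) (b := t+1)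
      (c := s) ((gcut_continuous a t).intervalIntegrable (μ := volume) _ _)
      ((gcut_continuous a t).intervalIntegrable (μ := volume) _ _)
    have hz : (∫ τ in (t+1)..s, gcut a t τ) = 0 := by
      rw [intervalIntegral.integral_congr (g := fun _ => (0:ℝ))]
      · simp
      · intro τ hτ
        rw [Set.uIcc_of_le h2.le] at hτ
        exact gcut_eq_zero_right a t τ hτ.1
    have : Fcut a t s = Fcut a t (t+1) := by
      unfold Fcut; rw [← hsplit, hz, add_zero]
    rw [this]
    exact key (t+1) (by linarith) le_rfl

lemma Fcut_ge (a t s : ℝ) (ha : 0 < a) (hat : a ≤ t) (hs : t ≤ s) : t - a ≤ Fcut a t s := by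
  have h1 : Fcut a t t ≤ Fcut a t s := Fcut_mono a t hs
  have hsplit := intervalIntegral.integral_add_adjacent_intervals (a := (0:ℝ)) (b := a)
      (c := t) ((gcut_continuous a t).intervalIntegrable (μ := volume) _ _)
      ((gcut_continuous a t).intervalIntegrable (μ := volume) _ _)
  have h2 : (∫ τ in a..t, gcut a t τ) = t - a := by
    rw [intervalIntegral.integral_congr (g := fun _ => (1:ℝ))]
    · simp
    · intro τ hτ
      rw [Set.uIcc_of_le hat] at hτ
      exact gcut_eq_one a t τ ha hτ.1 hτ.2
  have h3 : 0 ≤ ∫ τ in (0:ℝ)..a, gcut a t τ :=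
    intervalIntegral.integral_nonneg ha.le (fun x _ => gcut_nonneg a t x)
  have : Fcut a t t = (∫ τ in (0:ℝ)..a, gcut a t τ) + (t - a) := by
    unfold Fcut; rw [← hsplit, h2]
  linarith


/-- pointwise Young-type inequality for rpow -/
lemma young_rpow {r ε q nn : ℝ} (hr : 0 ≤ r) (hε : 0 < ε) (hq : 0 < q) (hqn : q < nn) :
    r ^ q ≤ ε * r ^ nn + ε ^ (-(q/(nn - q))) := by
  have hnnq : 0 < nn - q := by linarith
  rcases le_or_gt (ε⁻¹) (r ^ (nn - q)) with h | h
  · have hrpos : 0 < r := by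
      rcases eq_or_lt_of_le hr with h0 | h0
      · exfalso
        rw [← h0, Real.zero_rpow hnnq.ne'] at h
        exact absurd h (not_le.2 (inv_pos.2 hε))
      · exact h0
    have key : r ^ q ≤ ε * r ^ nn := by
      have h1 : ε⁻¹ * r ^ q ≤ r ^ (nn - q) * r ^ q :=
        mul_le_mul_of_nonneg_right h (Real.rpow_nonneg hr _)
      have h2 : r ^ (nn - q) * r ^ q = r ^ nn := by
        rw [← Real.rpow_add hrpos]; ring_nf
      rw [h2] at h1
      calc r ^ q = ε * (ε⁻¹ * r ^ q) := by field_simp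
        _ ≤ ε * r ^ nn := mul_le_mul_of_nonneg_left h1 hε.le
    exact key.trans (le_add_of_nonneg_right (Real.rpow_nonneg hε.le _))
  · have key : r ^ q ≤ ε ^ (-(q/(nn - q))) := by
      have h1 : r ^ q = (r ^ (nn - q)) ^ (q/(nn-q)) := by
        rw [← Real.rpow_mul hr]
        congr 1
        field_simp
      have h2 : (r ^ (nn - q)) ^ (q/(nn-q)) ≤ (ε⁻¹) ^ (q/(nn-q)) :=
        Real.rpow_le_rpow (Real.rpow_nonneg hr _) h.le (by positivity)
      have h3 : (ε⁻¹) ^ (q/(nn-q)) = ε ^ (-(q/(nn - q))) := by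
        rw [Real.rpow_neg hε.le, Real.inv_rpow hε.le]
      rw [h1, ← h3]
      exact h2
    refine key.trans (le_add_of_nonneg_left ?_)
    positivity



section AuxStmt19

variable {n : ℕ} {Ω : Set (EuclideanSpace ℝ (Fin n))} {u : EuclideanSpace ℝ (Fin n) → ℝ}

/-- measurability of sublevel-type sets -/
lemma measSet (hΩo : IsOpen Ω) (hu : MemA n Ω u) {T : Set ℝ} (hT : IsClosed T) :
    MeasurableSet (Ω ∩ u ⁻¹' T) := by
  have h1 : Ω ∩ u ⁻¹' T = Ω ∩ (closure Ω ∩ u ⁻¹' T) := by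
    ext x; simp only [Set.mem_inter_iff, Set.mem_preimage]
    exact ⟨fun ⟨h, h'⟩ => ⟨h, subset_closure h, h'⟩, fun ⟨h, _, h'⟩ => ⟨h, h'⟩⟩
  rw [h1]
  exact hΩo.measurableSet.inter
    (hu.contOn.preimage_isClosed_of_isClosed isClosed_closure hT).measurableSet

lemma gradu_aemeas (hΩo : IsOpen Ω) (hu : MemA n Ω u) :
    AEMeasurable (gradient u) (volume.restrict Ω) :=
  hu.gradCont.aemeasurable hΩo.measurableSet

lemma u_aemeas (hΩo : IsOpen Ω) (hu : MemA n Ω u) :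
    AEMeasurable u (volume.restrict Ω) :=
  (hu.contOn.mono subset_closure).aemeasurable hΩo.measurableSet

lemma exp_integrableOn (hΩb : Bornology.IsBounded Ω) (hu : MemA n Ω u) :
    IntegrableOn (fun x => Real.exp (u x)) Ω volume :=
  ((Real.continuous_exp.comp_continuousOn hu.contOn).integrableOn_compact
    hΩb.isCompact_closure).mono_set subset_closure

/-- **Key energy estimate**: testing the equation with `Fcut a t ∘ u`. -/
lemma keyEnergy (hn : 2 ≤ n) (hΩo : IsOpen Ω) (hΩb : Bornology.IsBounded Ω)
    {lam C₂ : ℝ} (hlam : 0 < lam) (hu : MemA n Ω u) (hpos : ∀ x ∈ Ω, 0 ≤ u x)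
    (hsol : IsWeakSol n Ω u (fun x => lam * Real.exp (u x)))
    (hbound : lam * ∫ x in Ω, Real.exp (u x) ≤ C₂)
    {a t : ℝ} (ha : 0 < a) (hat : a ≤ t) :
    ∫ x in Ω ∩ u ⁻¹' (Set.Icc a t), ‖gradient u x‖ ^ (n:ℝ) ≤ (t + 1) * C₂ := by
  classical
  have hclos : IsCompact (closure Ω) := hΩb.isCompact_closure
  have hmeasΩ : MeasurableSet Ω := hΩo.measurableSet
  -- the compact set K
  set K : Set (EuclideanSpace ℝ (Fin n)) := closure Ω ∩ u ⁻¹' (Set.Ici (a/2)) with hK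
  have hKclosed : IsClosed K :=
    hu.contOn.preimage_isClosed_of_isClosed isClosed_closure isClosed_Ici
  have hKcomp : IsCompact K := hclos.of_isClosed_subset hKclosed Set.inter_subset_left
  have hKΩ : K ⊆ Ω := by
    rintro x ⟨hxc, hxu⟩
    by_contra hxΩ
    have hfront : x ∈ frontier Ω := by
      rw [hΩo.frontier_eq]; exact ⟨hxc, hxΩ⟩
    have := hu.boundary x hfront
    have : a / 2 ≤ (0:ℝ) := by rw [← this]; exact hxu
    linarith
  -- the test function
  set φ : EuclideanSpace ℝ (Fin n) → ℝ := Ω.indicator (fun x => Fcut a t (u x)) with hφdef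
  have hφzero : ∀ y ∉ K, φ y = 0 := by
    intro y hy
    by_cases hyΩ : y ∈ Ω
    · have : u y < a / 2 := by
        by_contra h
        exact hy ⟨subset_closure hyΩ, le_of_not_gt h⟩
      simp only [hφdef, Set.indicator_of_mem hyΩ]
      exact Fcut_eq_zero a t (u y) ha this.le
    · simp [hφdef, Set.indicator_of_notMem hyΩ]
  have hsupp : tsupport φ ⊆ K :=
    closure_minimal (Function.support_subset_iff'.2 hφzero) hKclosed
  have hφcs : HasCompactSupport φ := HasCompactSupport.intro hKcomp hφzero
  -- eventual equality on Ω
  have hφev : ∀ x ∈ Ω, φ =ᶠ[nhds x] fun y => Fcut a t (u y) := fun x hx =>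
    Filter.eventuallyEq_of_mem (hΩo.mem_nhds hx) (fun y hy => Set.indicator_of_mem hy _)
  -- u is C¹ at points of Ω
  have hucd : ∀ x ∈ Ω, ContDiffAt ℝ 1 u x := by
    intro x hx
    rw [contDiffAt_one_iff]
    refine ⟨fun y => InnerProductSpace.toDual ℝ (EuclideanSpace ℝ (Fin n)) (gradient u y), Ω, hΩo.mem_nhds hx,
      (InnerProductSpace.toDual ℝ (EuclideanSpace ℝ (Fin n))).continuous.comp_continuousOn hu.gradCont, fun y hy => ?_⟩
    exact (hu.diff y hy).hasGradientAt.hasFDerivAt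
  have hφcd : ContDiff ℝ 1 φ := by
    rw [contDiff_iff_contDiffAt]
    intro x
    by_cases hx : x ∈ Ω
    · exact (((Fcut_contDiff a t).contDiffAt).comp x (hucd x hx)).congr_of_eventuallyEq
        (hφev x hx)
    · have hxK : x ∈ Kᶜ := fun hxK => hx (hKΩ hxK)
      have h0 : φ =ᶠ[nhds x] fun _ => (0:ℝ) :=
        Filter.eventuallyEq_of_mem (hKclosed.isOpen_compl.mem_nhds hxK)
          (fun y hy => hφzero y hy)
      exact contDiffAt_const.congr_of_eventuallyEq h0
  -- gradient formula on Ω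
  have hgradφ : ∀ x ∈ Ω, gradient φ x = gcut a t (u x) • gradient u x := by
    intro x hx
    have h1 : HasFDerivAt u (InnerProductSpace.toDual ℝ (EuclideanSpace ℝ (Fin n)) (gradient u x)) x :=
      (hu.diff x hx).hasGradientAt.hasFDerivAt
    have h2 : HasDerivAt (Fcut a t) (gcut a t (u x)) (u x) := Fcut_hasDerivAt a t (u x)
    have h3 := h2.comp_hasFDerivAt x h1
    have h4 : HasFDerivAt φ (gcut a t (u x) • InnerProductSpace.toDual ℝ (EuclideanSpace ℝ (Fin n)) (gradient u x)) x :=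
      h3.congr_of_eventuallyEq (hφev x hx)
    have h5 : HasGradientAt φ (gcut a t (u x) • gradient u x) x := by
      rw [hasGradientAt_iff_hasFDerivAt, _root_.map_smul]
      exact h4
    exact h5.gradient
  -- pointwise integrand identity on Ω
  have hinteq : ∀ x ∈ Ω,
      ‖gradient u x‖ ^ ((n : ℝ) - 2) * (inner ℝ (gradient u x) (gradient φ x) : ℝ) =
        gcut a t (u x) * ‖gradient u x‖ ^ (n:ℝ) := by
    intro x hx
    rw [hgradφ x hx, real_inner_smul_right, real_inner_self_eq_norm_sq]
    rcases eq_or_lt_of_le (norm_nonneg (gradient u x)) with hr | hr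
    · rw [← hr]
      have h2 : ((0:ℝ)) ^ (2:ℕ) = 0 := by norm_num
      have hn0 : (0:ℝ) ^ (n:ℝ) = 0 := Real.zero_rpow (by positivity)
      rw [h2, hn0]; ring
    · rw [← Real.rpow_natCast ‖gradient u x‖ 2]
      rw [show ‖gradient u x‖ ^ ((n:ℝ) - 2) * (gcut a t (u x) * ‖gradient u x‖ ^ ((2:ℕ):ℝ))
          = gcut a t (u x) * (‖gradient u x‖ ^ ((n:ℝ) - 2) * ‖gradient u x‖ ^ ((2:ℕ):ℝ)) by ring]
      rw [← Real.rpow_add hr]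
      norm_num
  -- the weak formulation
  have E1 := hsol φ hφcd hφcs (hsupp.trans hKΩ)
  have E2 : (∫ x in Ω, ‖gradient u x‖ ^ ((n : ℝ) - 2) *
      (inner ℝ (gradient u x) (gradient φ x) : ℝ)) =
      ∫ x in Ω, gcut a t (u x) * ‖gradient u x‖ ^ (n:ℝ) :=
    setIntegral_congr_fun hmeasΩ hinteq
  have E3 : (∫ x in Ω, (lam * Real.exp (u x)) * φ x) =
      ∫ x in Ω, lam * (Real.exp (u x) * Fcut a t (u x)) :=
    setIntegral_congr_fun hmeasΩ (fun x hx => by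
      simp only [hφdef, Set.indicator_of_mem hx]; ring)
  -- integrability facts
  have hgn : AEMeasurable (fun x => ‖gradient u x‖ ^ (n:ℝ)) (volume.restrict Ω) :=
    (Real.continuous_rpow_const (by positivity)).measurable.comp_aemeasurable
      ((gradu_aemeas hΩo hu).norm)
  have hgu : AEMeasurable (fun x => gcut a t (u x)) (volume.restrict Ω) :=
    (gcut_continuous a t).measurable.comp_aemeasurable (u_aemeas hΩo hu)
  have hig : IntegrableOn (fun x => gcut a t (u x) * ‖gradient u x‖ ^ (n:ℝ)) Ω volume := by
    refine hu.energy.mono' ((hgu.mul hgn).aestronglyMeasurable) ?_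
    filter_upwards with x
    have h1 : 0 ≤ ‖gradient u x‖ ^ (n:ℝ) := Real.rpow_nonneg (norm_nonneg _) _
    rw [Real.norm_eq_abs, abs_of_nonneg (mul_nonneg (gcut_nonneg a t _) h1)]
    calc gcut a t (u x) * ‖gradient u x‖ ^ (n:ℝ) ≤ 1 * ‖gradient u x‖ ^ (n:ℝ) := by
          exact mul_le_mul_of_nonneg_right (gcut_le_one a t _) h1
      _ = ‖gradient u x‖ ^ (n:ℝ) := one_mul _
  -- the main chain
  have hmeasS : MeasurableSet (Ω ∩ u ⁻¹' (Set.Icc a t)) := measSet hΩo hu isClosed_Icc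
  have step1 : (∫ x in Ω ∩ u ⁻¹' (Set.Icc a t), ‖gradient u x‖ ^ (n:ℝ))
      = ∫ x in Ω ∩ u ⁻¹' (Set.Icc a t), gcut a t (u x) * ‖gradient u x‖ ^ (n:ℝ) :=
    setIntegral_congr_fun hmeasS (fun x hx => by
      rw [gcut_eq_one a t (u x) ha hx.2.1 hx.2.2, one_mul])
  have step2 : (∫ x in Ω ∩ u ⁻¹' (Set.Icc a t), gcut a t (u x) * ‖gradient u x‖ ^ (n:ℝ))
      ≤ ∫ x in Ω, gcut a t (u x) * ‖gradient u x‖ ^ (n:ℝ) := by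
    refine setIntegral_mono_set hig ?_ (HasSubset.Subset.eventuallyLE Set.inter_subset_left)
    filter_upwards with x
    exact mul_nonneg (gcut_nonneg a t _) (Real.rpow_nonneg (norm_nonneg _) _)
  -- bound the right-hand side
  have hexpint : IntegrableOn (fun x => Real.exp (u x)) Ω volume := exp_integrableOn hΩb hu
  have hFuint : IntegrableOn (fun x => lam * (Real.exp (u x) * Fcut a t (u x))) Ω volume := by
    have hcont : ContinuousOn (fun x => lam * (Real.exp (u x) * Fcut a t (u x))) (closure Ω) :=
      ((Real.continuous_exp.comp_continuousOn hu.contOn).mul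
        ((Fcut_contDiff a t).continuous.comp_continuousOn hu.contOn)).const_smul lam
    exact (hcont.integrableOn_compact hclos).mono_set subset_closure
  have step3 : (∫ x in Ω, lam * (Real.exp (u x) * Fcut a t (u x)))
      ≤ ∫ x in Ω, (lam * (t+1)) * Real.exp (u x) := by
    refine setIntegral_mono_on hFuint (hexpint.const_mul _) hmeasΩ (fun x hx => ?_)
    have h1 : Fcut a t (u x) ≤ t + 1 := Fcut_le a t (u x) ha (by linarith)
    have h2 : (0:ℝ) < Real.exp (u x) := Real.exp_pos _
    calc lam * (Real.exp (u x) * Fcut a t (u x)) ≤ lam * (Real.exp (u x) * (t+1)) := by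
          apply mul_le_mul_of_nonneg_left _ hlam.le
          exact mul_le_mul_of_nonneg_left h1 h2.le
      _ = (lam * (t+1)) * Real.exp (u x) := by ring
  have step4 : (∫ x in Ω, (lam * (t+1)) * Real.exp (u x)) ≤ (t + 1) * C₂ := by
    rw [MeasureTheory.integral_const_mul]
    have h1 : lam * (t+1) * ∫ x in Ω, Real.exp (u x) = (t+1) * (lam * ∫ x in Ω, Real.exp (u x)) := by
      ring
    rw [h1]
    exact mul_le_mul_of_nonneg_left hbound (by linarith)
  calc (∫ x in Ω ∩ u ⁻¹' (Set.Icc a t), ‖gradient u x‖ ^ (n:ℝ))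
      = ∫ x in Ω ∩ u ⁻¹' (Set.Icc a t), gcut a t (u x) * ‖gradient u x‖ ^ (n:ℝ) := step1
    _ ≤ ∫ x in Ω, gcut a t (u x) * ‖gradient u x‖ ^ (n:ℝ) := step2
    _ = ∫ x in Ω, (lam * Real.exp (u x)) * φ x := by rw [← E2, E1]
    _ = ∫ x in Ω, lam * (Real.exp (u x) * Fcut a t (u x)) := E3
    _ ≤ ∫ x in Ω, (lam * (t+1)) * Real.exp (u x) := step3
    _ ≤ (t + 1) * C₂ := step4


/-- Test function C¹/compact-support/fderiv-bound package. -/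
lemma testfun {u : EuclideanSpace ℝ (Fin n) → ℝ} (hΩo : IsOpen Ω)
    (hΩb : Bornology.IsBounded Ω) (hu : MemA n Ω u) {a t : ℝ} (ha : 0 < a) :
    ContDiff ℝ 1 (Ω.indicator fun x => Fcut a t (u x)) ∧
    HasCompactSupport (Ω.indicator fun x => Fcut a t (u x)) ∧
    tsupport (Ω.indicator fun x => Fcut a t (u x)) ⊆ Ω ∧
    (∀ x, ‖fderiv ℝ (Ω.indicator fun y => Fcut a t (u y)) x‖ ≤
      (Ω ∩ u ⁻¹' (Set.Icc (a/2) (t+1))).indicator (fun y => ‖gradient u y‖) x) := by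
  classical
  have hclos : IsCompact (closure Ω) := hΩb.isCompact_closure
  set K : Set (EuclideanSpace ℝ (Fin n)) := closure Ω ∩ u ⁻¹' (Set.Ici (a/2)) with hK
  have hKclosed : IsClosed K :=
    hu.contOn.preimage_isClosed_of_isClosed isClosed_closure isClosed_Ici
  have hKcomp : IsCompact K := hclos.of_isClosed_subset hKclosed Set.inter_subset_left
  have hKΩ : K ⊆ Ω := by
    rintro x ⟨hxc, hxu⟩
    by_contra hxΩ
    have hfront : x ∈ frontier Ω := by rw [hΩo.frontier_eq]; exact ⟨hxc, hxΩ⟩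
    have h0 := hu.boundary x hfront
    have : a / 2 ≤ (0:ℝ) := by rw [← h0]; exact hxu
    linarith
  set φ : EuclideanSpace ℝ (Fin n) → ℝ := Ω.indicator (fun x => Fcut a t (u x)) with hφdef
  have hφzero : ∀ y ∉ K, φ y = 0 := by
    intro y hy
    by_cases hyΩ : y ∈ Ω
    · have : u y < a / 2 := by
        by_contra h
        exact hy ⟨subset_closure hyΩ, le_of_not_gt h⟩
      simp only [hφdef, Set.indicator_of_mem hyΩ]
      exact Fcut_eq_zero a t (u y) ha this.le
    · simp [hφdef, Set.indicator_of_notMem hyΩ]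
  have hsupp : tsupport φ ⊆ K :=
    closure_minimal (Function.support_subset_iff'.2 hφzero) hKclosed
  have hφcs : HasCompactSupport φ := HasCompactSupport.intro hKcomp hφzero
  have hφev : ∀ x ∈ Ω, φ =ᶠ[nhds x] fun y => Fcut a t (u y) := fun x hx =>
    Filter.eventuallyEq_of_mem (hΩo.mem_nhds hx) (fun y hy => Set.indicator_of_mem hy _)
  have hucd : ∀ x ∈ Ω, ContDiffAt ℝ 1 u x := by
    intro x hx
    rw [contDiffAt_one_iff]
    refine ⟨fun y => InnerProductSpace.toDual ℝ (EuclideanSpace ℝ (Fin n)) (gradient u y), Ω,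
      hΩo.mem_nhds hx,
      (InnerProductSpace.toDual ℝ (EuclideanSpace ℝ (Fin n))).continuous.comp_continuousOn
        hu.gradCont, fun y hy => ?_⟩
    exact (hu.diff y hy).hasGradientAt.hasFDerivAt
  have hφcd : ContDiff ℝ 1 φ := by
    rw [contDiff_iff_contDiffAt]
    intro x
    by_cases hx : x ∈ Ω
    · exact (((Fcut_contDiff a t).contDiffAt).comp x (hucd x hx)).congr_of_eventuallyEq
        (hφev x hx)
    · have hxK : x ∈ Kᶜ := fun hxK => hx (hKΩ hxK)
      have h0 : φ =ᶠ[nhds x] fun _ => (0:ℝ) :=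
        Filter.eventuallyEq_of_mem (hKclosed.isOpen_compl.mem_nhds hxK)
          (fun y hy => hφzero y hy)
      exact contDiffAt_const.congr_of_eventuallyEq h0
  refine ⟨hφcd, hφcs, hsupp.trans hKΩ, fun x => ?_⟩
  by_cases hx : x ∈ Ω
  · -- fderiv formula
    have h1 : HasFDerivAt u
        (InnerProductSpace.toDual ℝ (EuclideanSpace ℝ (Fin n)) (gradient u x)) x :=
      (hu.diff x hx).hasGradientAt.hasFDerivAt
    have h3 := (Fcut_hasDerivAt a t (u x)).comp_hasFDerivAt x h1
    have h4 : HasFDerivAt φ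
        (gcut a t (u x) • InnerProductSpace.toDual ℝ (EuclideanSpace ℝ (Fin n))
          (gradient u x)) x :=
      h3.congr_of_eventuallyEq (hφev x hx)
    have hfd : fderiv ℝ φ x = gcut a t (u x) •
        InnerProductSpace.toDual ℝ (EuclideanSpace ℝ (Fin n)) (gradient u x) := h4.fderiv
    have hnorm : ‖fderiv ℝ φ x‖ = gcut a t (u x) * ‖gradient u x‖ := by
      rw [hfd, norm_smul, Real.norm_eq_abs, abs_of_nonneg (gcut_nonneg a t _),
        LinearIsometryEquiv.norm_map]
    by_cases hxW : x ∈ Ω ∩ u ⁻¹' (Set.Icc (a/2) (t+1))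
    · rw [Set.indicator_of_mem hxW, hnorm]
      calc gcut a t (u x) * ‖gradient u x‖ ≤ 1 * ‖gradient u x‖ :=
            mul_le_mul_of_nonneg_right (gcut_le_one a t _) (norm_nonneg _)
        _ = ‖gradient u x‖ := one_mul _
    · rw [Set.indicator_of_notMem hxW, hnorm]
      have hcases : u x < a/2 ∨ t + 1 < u x := by
        by_contra h
        push_neg at h
        exact hxW ⟨hx, ⟨h.1, h.2⟩⟩
      have hg0 : gcut a t (u x) = 0 := by
        rcases hcases with h | h
        · exact gcut_eq_zero_left a t (u x) ha h.le
        · exact gcut_eq_zero_right a t (u x) h.le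
      rw [hg0, zero_mul]
  · have hxK : x ∈ Kᶜ := fun hxK => hx (hKΩ hxK)
    have h0 : φ =ᶠ[nhds x] fun _ => (0:ℝ) :=
      Filter.eventuallyEq_of_mem (hKclosed.isOpen_compl.mem_nhds hxK)
        (fun y hy => hφzero y hy)
    have : fderiv ℝ φ x = 0 := by
      rw [Filter.EventuallyEq.fderiv_eq h0, fderiv_fun_const]
      rfl
    rw [this]
    have hxW : x ∉ Ω ∩ u ⁻¹' (Set.Icc (a/2) (t+1)) := fun h => hx h.1
    rw [Set.indicator_of_notMem hxW]
    simp

/-- **Polynomial decay of superlevel sets**, via Gagliardo-Nirenberg-Sobolev. -/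
lemma decay (hn : 2 ≤ n) (hΩo : IsOpen Ω) (hΩb : Bornology.IsBounded Ω)
    {C₂ : ℝ} (hC₂ : 0 < C₂) (m : ℝ) (hm : 1 ≤ m) :
    ∃ D : ℝ, 0 ≤ D ∧ ∀ (lam : ℝ) (u : EuclideanSpace ℝ (Fin n) → ℝ), 0 < lam → MemA n Ω u →
      (∀ x ∈ Ω, 0 ≤ u x) → IsWeakSol n Ω u (fun x => lam * Real.exp (u x)) →
      (lam * ∫ x in Ω, Real.exp (u x) ≤ C₂) →
      ∀ t : ℝ, 2 ≤ t → (volume (Ω ∩ u ⁻¹' (Set.Ici t))).toReal ≤ D * t ^ (-m) := by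
  classical
  have hn2 : (2:ℝ) ≤ (n:ℝ) := by exact_mod_cast hn
  have hnpos : (0:ℝ) < (n:ℝ) := by linarith
  -- the exponents
  set pr : ℝ := max (2*m) (2*(n:ℝ)) with hprdef
  have hpr1 : 2*m ≤ pr := le_max_left _ _
  have hpr2 : 2*(n:ℝ) ≤ pr := le_max_right _ _
  have hprpos : (0:ℝ) < pr := by linarith
  set p' : ℝ≥0 := pr.toNNReal with hp'def
  have hp'coe : (p' : ℝ) = pr := Real.coe_toNNReal _ hprpos.le
  set p : ℝ≥0 := (p'⁻¹ + (n:ℝ≥0)⁻¹)⁻¹ with hpdef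
  have hpcoe : (p : ℝ) = (pr⁻¹ + (n:ℝ)⁻¹)⁻¹ := by
    rw [hpdef]
    push_cast
    rw [hp'coe]
  have hsumpos : (0:ℝ) < pr⁻¹ + (n:ℝ)⁻¹ := by positivity
  have hppos : (0:ℝ) < (p : ℝ) := by rw [hpcoe]; positivity
  have hpinv : ((p : ℝ))⁻¹ = pr⁻¹ + (n:ℝ)⁻¹ := by rw [hpcoe, inv_inv]
  have hp1 : 1 ≤ p := by
    rw [← NNReal.coe_le_coe, NNReal.coe_one, hpcoe]
    rw [le_inv_comm₀ one_pos hsumpos]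
    have h1 : pr⁻¹ ≤ (4:ℝ)⁻¹ := by
      apply inv_anti₀ (by norm_num)
      linarith
    have h2 : ((n:ℝ))⁻¹ ≤ (2:ℝ)⁻¹ := inv_anti₀ (by norm_num) hn2
    rw [inv_one]
    linarith
  have hpltn : (p : ℝ) < (n:ℝ) := by
    have h1 : ((n:ℝ))⁻¹ < ((p:ℝ))⁻¹ := by
      rw [hpinv]
      have : (0:ℝ) < pr⁻¹ := by positivity
      linarith
    exact (inv_lt_inv₀ hnpos hppos).1 h1
  have hpdivn : (p:ℝ) / (n:ℝ) < 1 := (div_lt_one hnpos).2 hpltn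
  have hpdivn0 : 0 ≤ 1 - (p:ℝ)/(n:ℝ) := by linarith
  -- the GNS constant
  set CG : ℝ≥0 :=
    SNormLESNormFDerivOfEqConst ℝ (volume : Measure (EuclideanSpace ℝ (Fin n))) ((p:ℝ)) with hCGdef
  set 𝒱 : ℝ≥0∞ := volume (closure Ω) with h𝒱def
  have h𝒱top : 𝒱 ≠ ∞ := (hΩb.isCompact_closure.measure_lt_top).ne
  -- the constant
  set D₁ : ℝ≥0∞ := (ENNReal.ofReal 2)^pr * (CG : ℝ≥0∞)^pr *
    (ENNReal.ofReal (2*C₂))^(pr/(n:ℝ)) * 𝒱^((1 - (p:ℝ)/(n:ℝ)) * (pr/(p:ℝ))) with hD₁def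
  have hD₁top : D₁ ≠ ∞ := by
    rw [hD₁def]
    refine ENNReal.mul_ne_top (ENNReal.mul_ne_top (ENNReal.mul_ne_top ?_ ?_) ?_) ?_
    · exact ENNReal.rpow_ne_top_of_nonneg hprpos.le ENNReal.ofReal_ne_top
    · exact ENNReal.rpow_ne_top_of_nonneg hprpos.le ENNReal.coe_ne_top
    · exact ENNReal.rpow_ne_top_of_nonneg (by positivity) ENNReal.ofReal_ne_top
    · exact ENNReal.rpow_ne_top_of_nonneg (by positivity) h𝒱top
  refine ⟨D₁.toReal, ENNReal.toReal_nonneg, ?_⟩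
  intro lam u hlam hu hpos hsol hbound t ht
  have ht1 : (1:ℝ) ≤ t := by linarith
  set S : Set (EuclideanSpace ℝ (Fin n)) := Ω ∩ u ⁻¹' (Set.Ici t) with hSdef
  set W : Set (EuclideanSpace ℝ (Fin n)) := Ω ∩ u ⁻¹' (Set.Icc (1/2 : ℝ) (t+1)) with hWdef
  have hSmeas : MeasurableSet S := measSet hΩo hu isClosed_Ici
  have hWmeas : MeasurableSet W := measSet hΩo hu isClosed_Icc
  have hWΩ : W ⊆ Ω := Set.inter_subset_left
  -- test function
  set v : EuclideanSpace ℝ (Fin n) → ℝ := Ω.indicator (fun x => Fcut 1 t (u x)) with hvdef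
  obtain ⟨hv1, hv2, _hv3, hv4⟩ := testfun hΩo hΩb hu (a := 1) (t := t) one_pos
  -- energy on W
  have EW : ∫ x in W, ‖gradient u x‖ ^ (n:ℝ) ≤ (t + 2) * C₂ := by
    have := keyEnergy hn hΩo hΩb hlam hu hpos hsol hbound
      (a := 1/2) (t := t+1) (by norm_num) (by linarith)
    calc ∫ x in W, ‖gradient u x‖ ^ (n:ℝ)
        = ∫ x in Ω ∩ u ⁻¹' (Set.Icc (1/2 : ℝ) (t+1)), ‖gradient u x‖ ^ (n:ℝ) := by rw [hWdef]
      _ ≤ (t + 1 + 1) * C₂ := this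
      _ = (t + 2) * C₂ := by ring
  -- Step A : lower bound for eLpNorm v p'
  have hp'ne0 : ((p' : ℝ≥0∞)) ≠ 0 := by
    simp only [ne_eq, ENNReal.coe_eq_zero]
    intro h
    rw [h] at hp'coe
    simp at hp'coe
    linarith
  have hL1 : ENNReal.ofReal (t-1) ^ pr * volume S ≤
      ∫⁻ x, ((‖v x‖₊ : ℝ≥0∞)) ^ pr := by
    calc ENNReal.ofReal (t-1) ^ pr * volume S
        = ∫⁻ _ in S, ENNReal.ofReal (t-1) ^ pr := (setLIntegral_const S _).symm
      _ ≤ ∫⁻ x in S, ((‖v x‖₊ : ℝ≥0∞)) ^ pr := by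
          refine setLIntegral_mono' hSmeas (fun x hx => ?_)
          have hxΩ : x ∈ Ω := hx.1
          have hxt : t ≤ u x := hx.2
          have hvx : t - 1 ≤ v x := by
            rw [hvdef, Set.indicator_of_mem hxΩ]
            exact Fcut_ge 1 t (u x) one_pos ht1 hxt
          have h1 : ENNReal.ofReal (t-1) ≤ (‖v x‖₊ : ℝ≥0∞) := by
            calc ENNReal.ofReal (t-1) ≤ ENNReal.ofReal (v x) := ENNReal.ofReal_le_ofReal hvx
              _ ≤ (‖v x‖₊ : ℝ≥0∞) := Real.ofReal_le_enorm (v x)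
          exact ENNReal.rpow_le_rpow h1 hprpos.le
      _ ≤ ∫⁻ x, ((‖v x‖₊ : ℝ≥0∞)) ^ pr := setLIntegral_le_lintegral S _
  have hL2 : eLpNorm v p' volume = (∫⁻ x, ((‖v x‖₊ : ℝ≥0∞)) ^ pr) ^ (1/pr) := by
    rw [eLpNorm_eq_lintegral_rpow_enorm_toReal hp'ne0 ENNReal.coe_ne_top]
    simp only [ENNReal.coe_toReal, hp'coe, one_div, enorm_eq_nnnorm]
  -- Step B : GNS
  have hfinrank : (0:ℕ) < Module.finrank ℝ (EuclideanSpace ℝ (Fin n)) := by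
    rw [finrank_euclideanSpace_fin]
    omega
  have hpp' : ((p' : ℝ))⁻¹ = ((p : ℝ))⁻¹ -
      ((Module.finrank ℝ (EuclideanSpace ℝ (Fin n)) : ℝ))⁻¹ := by
    rw [finrank_euclideanSpace_fin, hpinv, hp'coe]
    ring
  have hGNS : eLpNorm v p' volume ≤ CG * eLpNorm (fderiv ℝ v) p volume :=
    eLpNorm_le_eLpNorm_fderiv_of_eq volume hv1 hv2 hp1 hfinrank hpp'
  -- Step C : bound on eLpNorm of the derivative
  have hpne0 : ((p : ℝ≥0∞)) ≠ 0 := by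
    simp only [ne_eq, ENNReal.coe_eq_zero]
    intro h
    rw [h] at hppos
    simp at hppos
  have hgraduW : AEMeasurable (gradient u) (volume.restrict W) :=
    (gradu_aemeas hΩo hu).mono_measure (Measure.restrict_mono hWΩ le_rfl)
  have hfmeas : AEMeasurable (fun x => ((‖gradient u x‖₊ : ℝ≥0∞)) ^ (p:ℝ))
      (volume.restrict W) :=
    (hgraduW.enorm).pow aemeasurable_const
  -- pointwise bound on the derivative, into an indicator
  have hptws : ∀ x, ((‖fderiv ℝ v x‖₊ : ℝ≥0∞)) ^ (p:ℝ) ≤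
      W.indicator (fun y => ((‖gradient u y‖₊ : ℝ≥0∞)) ^ (p:ℝ)) x := by
    intro x
    have hb := hv4 x
    by_cases hxW : x ∈ W
    · rw [Set.indicator_of_mem hxW]
      rw [Set.indicator_of_mem (by simpa [hWdef] using hxW : x ∈ Ω ∩ u ⁻¹'
        (Set.Icc ((1:ℝ)/2) (t+1)))] at hb
      refine ENNReal.rpow_le_rpow ?_ hppos.le
      exact_mod_cast (by exact_mod_cast hb : (‖fderiv ℝ v x‖₊ : ℝ) ≤ (‖gradient u x‖₊ : ℝ))
    · rw [Set.indicator_of_notMem hxW]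
      rw [Set.indicator_of_notMem (by simpa [hWdef] using hxW)] at hb
      have h0 : fderiv ℝ v x = 0 := by
        rw [← norm_le_zero_iff]
        exact hb
      rw [h0]
      simp only [nnnorm_zero, ENNReal.coe_zero]
      rw [ENNReal.zero_rpow_of_pos hppos]
  have hLint : (∫⁻ x, ((‖fderiv ℝ v x‖₊ : ℝ≥0∞)) ^ (p:ℝ)) ≤
      ∫⁻ x in W, ((‖gradient u x‖₊ : ℝ≥0∞)) ^ (p:ℝ) := by
    calc (∫⁻ x, ((‖fderiv ℝ v x‖₊ : ℝ≥0∞)) ^ (p:ℝ))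
        ≤ ∫⁻ x, W.indicator (fun y => ((‖gradient u y‖₊ : ℝ≥0∞)) ^ (p:ℝ)) x :=
          lintegral_mono hptws
      _ = ∫⁻ x in W, ((‖gradient u x‖₊ : ℝ≥0∞)) ^ (p:ℝ) := lintegral_indicator hWmeas _
  -- Hölder on W
  have hconj : Real.HolderConjugate ((n:ℝ)/(p:ℝ)) ((1 - (p:ℝ)/(n:ℝ))⁻¹) := by
    rw [Real.holderConjugate_iff]
    constructor
    · rw [lt_div_iff₀ hppos, one_mul]
      exact hpltn
    · rw [inv_inv]
      field_simp
      ring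
  have hHolder : (∫⁻ x in W, ((‖gradient u x‖₊ : ℝ≥0∞)) ^ (p:ℝ)) ≤
      (∫⁻ x in W, ((‖gradient u x‖₊ : ℝ≥0∞)) ^ (n:ℝ)) ^ ((p:ℝ)/(n:ℝ)) *
        (volume W) ^ (1 - (p:ℝ)/(n:ℝ)) := by
    have h := ENNReal.lintegral_mul_le_Lp_mul_Lq (volume.restrict W) hconj hfmeas
      (aemeasurable_const (b := (1:ℝ≥0∞)))
    simp only [Pi.mul_apply, mul_one, ENNReal.one_rpow] at h
    calc (∫⁻ x in W, ((‖gradient u x‖₊ : ℝ≥0∞)) ^ (p:ℝ))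
        ≤ (∫⁻ x in W, (((‖gradient u x‖₊ : ℝ≥0∞)) ^ (p:ℝ)) ^ ((n:ℝ)/(p:ℝ))) ^
            (1/((n:ℝ)/(p:ℝ))) * (∫⁻ _ in W, (1:ℝ≥0∞)) ^ (1/(1 - (p:ℝ)/(n:ℝ))⁻¹) := h
      _ = (∫⁻ x in W, ((‖gradient u x‖₊ : ℝ≥0∞)) ^ (n:ℝ)) ^ ((p:ℝ)/(n:ℝ)) *
            (volume W) ^ (1 - (p:ℝ)/(n:ℝ)) := by
          congr 1
          · congr 1
            · apply lintegral_congr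
              intro x
              rw [← ENNReal.rpow_mul]
              congr 1
              field_simp
            · rw [one_div, inv_div]
          · rw [lintegral_one, Measure.restrict_apply_univ, one_div, inv_inv]
  -- energy conversion
  have hWint : IntegrableOn (fun x => ‖gradient u x‖ ^ (n:ℝ)) W volume :=
    hu.energy.mono_set hWΩ
  have henergyW : (∫⁻ x in W, ((‖gradient u x‖₊ : ℝ≥0∞)) ^ (n:ℝ)) ≤
      ENNReal.ofReal ((t+2)*C₂) := by
    have h1 : (∫⁻ x in W, ((‖gradient u x‖₊ : ℝ≥0∞)) ^ (n:ℝ)) =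
        ∫⁻ x in W, ENNReal.ofReal (‖gradient u x‖ ^ (n:ℝ)) := by
      apply lintegral_congr
      intro x
      rw [← ENNReal.ofReal_rpow_of_nonneg (norm_nonneg _) hnpos.le, ofReal_norm, enorm_eq_nnnorm]
    rw [h1, ← ofReal_integral_eq_lintegral_ofReal hWint
      (Filter.Eventually.of_forall (fun x => Real.rpow_nonneg (norm_nonneg _) _))]
    exact ENNReal.ofReal_le_ofReal EW
  -- volume of W bounded
  have hWvol : volume W ≤ 𝒱 := measure_mono (hWΩ.trans subset_closure)
  -- assemble derivative bound
  have hL4 : eLpNorm (fderiv ℝ v) p volume ≤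
      ((ENNReal.ofReal ((t+2)*C₂)) ^ ((p:ℝ)/(n:ℝ)) * 𝒱 ^ (1 - (p:ℝ)/(n:ℝ))) ^ (1/(p:ℝ)) := by
    rw [eLpNorm_eq_lintegral_rpow_enorm_toReal hpne0 ENNReal.coe_ne_top]
    simp only [ENNReal.coe_toReal, enorm_eq_nnnorm]
    refine ENNReal.rpow_le_rpow ?_ (by positivity)
    calc (∫⁻ x, ((‖fderiv ℝ v x‖₊ : ℝ≥0∞)) ^ (p:ℝ))
        ≤ ∫⁻ x in W, ((‖gradient u x‖₊ : ℝ≥0∞)) ^ (p:ℝ) := hLint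
      _ ≤ (∫⁻ x in W, ((‖gradient u x‖₊ : ℝ≥0∞)) ^ (n:ℝ)) ^ ((p:ℝ)/(n:ℝ)) *
            (volume W) ^ (1 - (p:ℝ)/(n:ℝ)) := hHolder
      _ ≤ (ENNReal.ofReal ((t+2)*C₂)) ^ ((p:ℝ)/(n:ℝ)) * 𝒱 ^ (1 - (p:ℝ)/(n:ℝ)) := by
          exact mul_le_mul' (ENNReal.rpow_le_rpow henergyW (by positivity))
            (ENNReal.rpow_le_rpow hWvol hpdivn0)
  -- combine : remove the 1/pr power
  have hcomb : ENNReal.ofReal (t-1) ^ pr * volume S ≤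
      ((CG:ℝ≥0∞) * ((ENNReal.ofReal ((t+2)*C₂)) ^ ((p:ℝ)/(n:ℝ)) *
        𝒱 ^ (1 - (p:ℝ)/(n:ℝ))) ^ (1/(p:ℝ))) ^ pr := by
    have h1 : (ENNReal.ofReal (t-1) ^ pr * volume S) ^ (1/pr) ≤
        (CG:ℝ≥0∞) * ((ENNReal.ofReal ((t+2)*C₂)) ^ ((p:ℝ)/(n:ℝ)) *
          𝒱 ^ (1 - (p:ℝ)/(n:ℝ))) ^ (1/(p:ℝ)) := by
      calc (ENNReal.ofReal (t-1) ^ pr * volume S) ^ (1/pr)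
          ≤ (∫⁻ x, ((‖v x‖₊ : ℝ≥0∞)) ^ pr) ^ (1/pr) :=
            ENNReal.rpow_le_rpow hL1 (by positivity)
        _ = eLpNorm v p' volume := hL2.symm
        _ ≤ CG * eLpNorm (fderiv ℝ v) p volume := hGNS
        _ ≤ _ := mul_le_mul_right hL4 _
    have h2 := ENNReal.rpow_le_rpow h1 hprpos.le
    rwa [← ENNReal.rpow_mul, one_div, inv_mul_cancel₀ hprpos.ne', ENNReal.rpow_one] at h2
  -- expand the right-hand side and simplify powers
  have hofpos : (0:ℝ≥0∞) < ENNReal.ofReal t := ENNReal.ofReal_pos.2 (by linarith)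
  have hofne : ENNReal.ofReal t ≠ 0 := hofpos.ne'
  have hRHS : ((CG:ℝ≥0∞) * ((ENNReal.ofReal ((t+2)*C₂)) ^ ((p:ℝ)/(n:ℝ)) *
        𝒱 ^ (1 - (p:ℝ)/(n:ℝ))) ^ (1/(p:ℝ))) ^ pr ≤
      ((CG:ℝ≥0∞)^pr * (ENNReal.ofReal (2*C₂))^(pr/(n:ℝ)) *
        𝒱^((1 - (p:ℝ)/(n:ℝ)) * (pr/(p:ℝ)))) * (ENNReal.ofReal t) ^ (pr/(n:ℝ)) := by
    have hA : ENNReal.ofReal ((t+2)*C₂) ≤ ENNReal.ofReal (2*C₂) * ENNReal.ofReal t := by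
      rw [← ENNReal.ofReal_mul (by positivity)]
      apply ENNReal.ofReal_le_ofReal
      nlinarith
    calc ((CG:ℝ≥0∞) * ((ENNReal.ofReal ((t+2)*C₂)) ^ ((p:ℝ)/(n:ℝ)) *
          𝒱 ^ (1 - (p:ℝ)/(n:ℝ))) ^ (1/(p:ℝ))) ^ pr
        = (CG:ℝ≥0∞)^pr * ((ENNReal.ofReal ((t+2)*C₂)) ^ ((p:ℝ)/(n:ℝ)) *
            𝒱 ^ (1 - (p:ℝ)/(n:ℝ))) ^ ((1/(p:ℝ)) * pr) := by
          rw [ENNReal.mul_rpow_of_nonneg _ _ hprpos.le, ENNReal.rpow_mul]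
      _ = (CG:ℝ≥0∞)^pr * ((ENNReal.ofReal ((t+2)*C₂)) ^ (((p:ℝ)/(n:ℝ)) * ((1/(p:ℝ)) * pr)) *
            𝒱 ^ ((1 - (p:ℝ)/(n:ℝ)) * ((1/(p:ℝ)) * pr))) := by
          rw [ENNReal.mul_rpow_of_nonneg _ _ (by positivity), ← ENNReal.rpow_mul,
            ← ENNReal.rpow_mul]
      _ = (CG:ℝ≥0∞)^pr * ((ENNReal.ofReal ((t+2)*C₂)) ^ (pr/(n:ℝ)) *
            𝒱 ^ ((1 - (p:ℝ)/(n:ℝ)) * (pr/(p:ℝ)))) := by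
          have e1 : ((p:ℝ)/(n:ℝ)) * ((1/(p:ℝ)) * pr) = pr/(n:ℝ) := by
            field_simp [hppos.ne', hnpos.ne']
          have e2 : (1 - (p:ℝ)/(n:ℝ)) * ((1/(p:ℝ)) * pr) = (1 - (p:ℝ)/(n:ℝ)) * (pr/(p:ℝ)) := by
            field_simp [hppos.ne', hnpos.ne']
          rw [e1, e2]
      _ ≤ (CG:ℝ≥0∞)^pr * (((ENNReal.ofReal (2*C₂)) * ENNReal.ofReal t) ^ (pr/(n:ℝ)) *
            𝒱 ^ ((1 - (p:ℝ)/(n:ℝ)) * (pr/(p:ℝ)))) := by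
          exact mul_le_mul_right (mul_le_mul_left (ENNReal.rpow_le_rpow hA (by positivity)) _) _
      _ = ((CG:ℝ≥0∞)^pr * (ENNReal.ofReal (2*C₂))^(pr/(n:ℝ)) *
            𝒱^((1 - (p:ℝ)/(n:ℝ)) * (pr/(p:ℝ)))) * (ENNReal.ofReal t) ^ (pr/(n:ℝ)) := by
          rw [ENNReal.mul_rpow_of_nonneg _ _ (by positivity)]
          ring
  -- lower bound : ofReal t ≤ 2 * ofReal (t-1)
  have hlow : (ENNReal.ofReal t) ^ pr ≤ (ENNReal.ofReal 2) ^ pr * ENNReal.ofReal (t-1) ^ pr := by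
    rw [← ENNReal.mul_rpow_of_nonneg _ _ hprpos.le]
    refine ENNReal.rpow_le_rpow ?_ hprpos.le
    rw [← ENNReal.ofReal_mul (by norm_num)]
    apply ENNReal.ofReal_le_ofReal
    linarith
  -- final ENNReal estimate
  have hfinal : volume S ≤ D₁ * ENNReal.ofReal (t ^ (-m)) := by
    have h1 : volume S * (ENNReal.ofReal t) ^ pr ≤ D₁ * (ENNReal.ofReal t) ^ (pr/(n:ℝ)) := by
      calc volume S * (ENNReal.ofReal t) ^ pr
          ≤ volume S * ((ENNReal.ofReal 2) ^ pr * ENNReal.ofReal (t-1) ^ pr) :=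
            mul_le_mul_right hlow _
        _ = (ENNReal.ofReal 2) ^ pr * (ENNReal.ofReal (t-1) ^ pr * volume S) := by ring
        _ ≤ (ENNReal.ofReal 2) ^ pr * (((CG:ℝ≥0∞)^pr * (ENNReal.ofReal (2*C₂))^(pr/(n:ℝ)) *
              𝒱^((1 - (p:ℝ)/(n:ℝ)) * (pr/(p:ℝ)))) * (ENNReal.ofReal t) ^ (pr/(n:ℝ))) :=
            mul_le_mul_right (hcomb.trans hRHS) _
        _ = D₁ * (ENNReal.ofReal t) ^ (pr/(n:ℝ)) := by rw [hD₁def]; ring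
    have hxne0 : (ENNReal.ofReal t) ^ pr ≠ 0 :=
      (ENNReal.rpow_pos hofpos ENNReal.ofReal_ne_top).ne'
    have h2 : volume S ≤ D₁ * (ENNReal.ofReal t) ^ (pr/(n:ℝ)) / (ENNReal.ofReal t) ^ pr := by
      rw [ENNReal.le_div_iff_mul_le (Or.inl hxne0)
        (Or.inl (ENNReal.rpow_ne_top_of_nonneg hprpos.le ENNReal.ofReal_ne_top))]
      exact h1
    have h3 : D₁ * (ENNReal.ofReal t) ^ (pr/(n:ℝ)) / (ENNReal.ofReal t) ^ pr =
        D₁ * (ENNReal.ofReal t) ^ (pr/(n:ℝ) - pr) := by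
      rw [mul_div_assoc, ENNReal.rpow_sub _ _ hofne ENNReal.ofReal_ne_top]
    have h4 : (ENNReal.ofReal t) ^ (pr/(n:ℝ) - pr) ≤ (ENNReal.ofReal t) ^ (-m) := by
      apply ENNReal.rpow_le_rpow_of_exponent_le (ENNReal.one_le_ofReal.2 ht1)
      have hprn : pr/(n:ℝ) ≤ pr/2 := by
        apply div_le_div_of_nonneg_left hprpos.le (by norm_num) hn2
      linarith
    have h5 : (ENNReal.ofReal t) ^ (-m) = ENNReal.ofReal (t ^ (-m)) := by
      rw [← ENNReal.ofReal_rpow_of_pos (by linarith)]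
    calc volume S ≤ D₁ * (ENNReal.ofReal t) ^ (pr/(n:ℝ) - pr) := h3 ▸ h2
      _ ≤ D₁ * (ENNReal.ofReal t) ^ (-m) := mul_le_mul_right h4 _
      _ = D₁ * ENNReal.ofReal (t ^ (-m)) := by rw [h5]
  -- pass to real numbers
  have htop : D₁ * ENNReal.ofReal (t ^ (-m)) ≠ ∞ :=
    ENNReal.mul_ne_top hD₁top ENNReal.ofReal_ne_top
  calc (volume S).toReal ≤ (D₁ * ENNReal.ofReal (t ^ (-m))).toReal :=
        ENNReal.toReal_mono htop hfinal
    _ = D₁.toReal * t ^ (-m) := by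
        rw [ENNReal.toReal_mul, ENNReal.toReal_ofReal (Real.rpow_nonneg (by linarith) _)]


/-- at an interior zero of a nonnegative function the gradient vanishes -/
lemma grad_zero_at_min {u : EuclideanSpace ℝ (Fin n) → ℝ} (hΩo : IsOpen Ω)
    (hpos : ∀ x ∈ Ω, 0 ≤ u x) {x : EuclideanSpace ℝ (Fin n)} (hx : x ∈ Ω) (hx0 : u x = 0) :
    gradient u x = 0 := by
  have hmin : IsLocalMin u x := by
    filter_upwards [hΩo.mem_nhds hx] with y hy
    rw [hx0]
    exact hpos y hy
  have := hmin.fderiv_eq_zero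
  rw [gradient, this, map_zero]



end AuxStmt19

theorem stmt19 (n : ℕ) (hn : 2 ≤ n)
    (Ω : Set (EuclideanSpace ℝ (Fin n))) (hΩo : IsOpen Ω)
    (hΩb : Bornology.IsBounded Ω) (hΩne : Ω.Nonempty)
    (C₂ : ℝ) (hC₂ : 0 < C₂) (q : ℝ) (hq1 : 1 < q) (hqn : q < n) :
    ∃ C : ℝ, ∀ lam : ℝ, 0 < lam →
      ∀ u : EuclideanSpace ℝ (Fin n) → ℝ, MemA n Ω u →
        (∀ x ∈ Ω, 0 ≤ u x) →
        IsWeakSol n Ω u (fun x => lam * Real.exp (u x)) →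
        lam * ∫ x in Ω, Real.exp (u x) ≤ C₂ →
        (∫ x in Ω, ‖gradient u x‖ ^ q) ≤ C := by
  classical
  have hmeasΩ : MeasurableSet Ω := hΩo.measurableSet
  have hclos : IsCompact (closure Ω) := hΩb.isCompact_closure
  have hn2 : (2:ℝ) ≤ (n:ℝ) := by exact_mod_cast hn
  have hnpos : (0:ℝ) < (n:ℝ) := by linarith
  have hq0 : (0:ℝ) < q := by linarith
  have hnq : (0:ℝ) < (n:ℝ) - q := by linarith
  set m : ℝ := 3*(n:ℝ)/((n:ℝ) - q) + 2 with hmdef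
  have hm : 1 ≤ m := by
    rw [hmdef]
    have : 0 < 3*(n:ℝ)/((n:ℝ) - q) := by positivity
    linarith
  obtain ⟨D, hD0, hDbound⟩ := decay hn hΩo hΩb hC₂ m hm
  set Vc : ℝ := (volume (closure Ω)).toReal with hVcdef
  have hVc0 : 0 ≤ Vc := ENNReal.toReal_nonneg
  have hZsummable : Summable (fun j : ℕ => (j:ℝ) ^ (-(2:ℝ))) :=
    Real.summable_nat_rpow.2 (by norm_num)
  set Z : ℝ := ∑' j : ℕ, (j:ℝ) ^ (-(2:ℝ)) with hZdef
  have hZ0 : 0 ≤ Z := tsum_nonneg (fun j => Real.rpow_nonneg (Nat.cast_nonneg j) _)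
  set K : ℝ := 3*C₂ + D + Vc with hKdef
  have hK0 : 0 ≤ K := by positivity
  refine ⟨(2*C₂ + Vc) + K * Z, ?_⟩
  intro lam hlam u hu hpos hsol hbound
  -- basic facts
  have hvolΩ : volume Ω < ∞ :=
    lt_of_le_of_lt (measure_mono subset_closure) hclos.measure_lt_top
  have hgradae : AEMeasurable (gradient u) (volume.restrict Ω) :=
    hu.gradCont.aemeasurable hmeasΩ
  have hIconst : ∀ (c : ℝ), IntegrableOn (fun _ => c) Ω volume :=
    fun c => integrableOn_const hvolΩ.ne
  have hyoung1 : ∀ r : ℝ, 0 ≤ r → r ^ q ≤ r ^ (n:ℝ) + 1 := by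
    intro r hr
    have := young_rpow (ε := 1) hr one_pos hq0 (by exact_mod_cast hqn)
    simpa using this
  have hIq : IntegrableOn (fun x => ‖gradient u x‖ ^ q) Ω volume := by
    refine (hu.energy.add (hIconst 1)).mono' ?_ ?_
    · exact ((Real.continuous_rpow_const hq0.le).measurable.comp_aemeasurable
        hgradae.norm).aestronglyMeasurable
    · filter_upwards with x
      rw [Real.norm_eq_abs, abs_of_nonneg (Real.rpow_nonneg (norm_nonneg _) _)]
      exact hyoung1 _ (norm_nonneg _)
  -- a bound on u
  obtain ⟨Bd, hBd⟩ := hclos.exists_bound_of_continuousOn hu.contOn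
  set N : ℕ := ⌈Bd⌉₊ + 1 with hNdef
  have huN : ∀ x ∈ Ω, u x < N := by
    intro x hx
    have h1 : u x ≤ Bd := le_trans (le_abs_self _) (by
      have := hBd x (subset_closure hx)
      rwa [Real.norm_eq_abs] at this)
    have h2 : Bd ≤ (⌈Bd⌉₊ : ℝ) := Nat.le_ceil Bd
    have : ((N:ℕ):ℝ) = (⌈Bd⌉₊ : ℝ) + 1 := by rw [hNdef]; push_cast; ring
    rw [this]
    linarith
  -- sets
  set A : ℕ → Set (EuclideanSpace ℝ (Fin n)) :=
    fun j => Ω ∩ u ⁻¹' (Set.Ico (j:ℝ) ((j:ℝ)+1)) with hAdef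
  set B₀ : Set (EuclideanSpace ℝ (Fin n)) := Ω ∩ u ⁻¹' (Set.Iio 1) with hB₀def
  have hmeasA : ∀ j : ℕ, MeasurableSet (A j) := by
    intro j
    have : A j = (Ω ∩ u ⁻¹' (Set.Ici (j:ℝ))) \ (Ω ∩ u ⁻¹' (Set.Ici ((j:ℝ)+1))) := by
      ext x
      simp only [hAdef, Set.mem_inter_iff, Set.mem_preimage, Set.mem_Ico, Set.mem_diff,
        Set.mem_Ici, not_and, not_le]
      constructor
      · rintro ⟨h1, h2, h3⟩
        exact ⟨⟨h1, h2⟩, fun _ => h3⟩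
      · rintro ⟨⟨h1, h2⟩, h3⟩
        exact ⟨h1, h2, h3 h1⟩
    rw [this]
    exact (measSet hΩo hu isClosed_Ici).diff (measSet hΩo hu isClosed_Ici)
  have hmeasB₀ : MeasurableSet B₀ := by
    have : B₀ = Ω \ (Ω ∩ u ⁻¹' (Set.Ici (1:ℝ))) := by
      ext x
      simp only [hB₀def, Set.mem_inter_iff, Set.mem_preimage, Set.mem_Iio, Set.mem_diff,
        Set.mem_Ici, not_and, not_le]
      constructor
      · rintro ⟨h1, h2⟩
        exact ⟨h1, fun _ => h2⟩
      · rintro ⟨h1, h2⟩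
        exact ⟨h1, h2 h1⟩
    rw [this]
    exact hmeasΩ.diff (measSet hΩo hu isClosed_Ici)
  have hAΩ : ∀ j, A j ⊆ Ω := fun j => Set.inter_subset_left
  have hB₀Ω : B₀ ⊆ Ω := Set.inter_subset_left
  have hvol_le : ∀ (s : Set (EuclideanSpace ℝ (Fin n))), s ⊆ Ω → (volume s).toReal ≤ Vc := by
    intro s hs
    exact ENNReal.toReal_mono hclos.measure_lt_top.ne
      (measure_mono (hs.trans subset_closure))
  -- energy on B₀ via monotone convergence
  have hB₀energy : (∫ x in B₀, ‖gradient u x‖ ^ (n:ℝ)) ≤ 2*C₂ := by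
    set Z0 : Set (EuclideanSpace ℝ (Fin n)) := Ω ∩ u ⁻¹' {(0:ℝ)} with hZ0def
    set P : Set (EuclideanSpace ℝ (Fin n)) := Ω ∩ u ⁻¹' (Set.Ioc (0:ℝ) 1) with hPdef
    have hmeasZ0 : MeasurableSet Z0 := measSet hΩo hu isClosed_singleton
    have hmeasP : MeasurableSet P := by
      have : P = (Ω ∩ u ⁻¹' (Set.Icc (0:ℝ) 1)) \ Z0 := by
        ext x
        simp only [hPdef, hZ0def, Set.mem_inter_iff, Set.mem_preimage, Set.mem_Ioc,
          Set.mem_Icc, Set.mem_diff, Set.mem_singleton_iff, not_and]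
        constructor
        · rintro ⟨h1, h2, h3⟩
          exact ⟨⟨h1, h2.le, h3⟩, fun _ => by linarith⟩
        · rintro ⟨⟨h1, h2, h3⟩, h4⟩
          have : u x ≠ 0 := h4 h1
          exact ⟨h1, lt_of_le_of_ne h2 (Ne.symm this), h3⟩
      rw [this]
      exact (measSet hΩo hu isClosed_Icc).diff hmeasZ0
    have hZ0zero : (∫ x in Z0, ‖gradient u x‖ ^ (n:ℝ)) = 0 := by
      rw [setIntegral_congr_fun hmeasZ0 (g := fun _ => (0:ℝ)) ?_, integral_zero]
      intro x hx
      have hx0 : u x = 0 := hx.2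
      show ‖gradient u x‖ ^ (n:ℝ) = 0
      rw [grad_zero_at_min hΩo hpos hx.1 hx0, norm_zero, Real.zero_rpow hnpos.ne']
    have hPbound : (∫ x in P, ‖gradient u x‖ ^ (n:ℝ)) ≤ 2*C₂ := by
      set s : ℕ → Set (EuclideanSpace ℝ (Fin n)) :=
        fun k => Ω ∩ u ⁻¹' (Set.Icc (1/((k:ℝ)+1)) 1) with hsdef
      have hsm : ∀ k, MeasurableSet (s k) := fun k => measSet hΩo hu isClosed_Icc
      have hmono : Monotone s := by
        intro k l hkl
        apply Set.inter_subset_inter_right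
        apply Set.preimage_mono
        apply Set.Icc_subset_Icc_left
        apply one_div_le_one_div_of_le (by positivity)
        have : (k:ℝ) ≤ (l:ℝ) := by exact_mod_cast hkl
        linarith
      have hunion : (⋃ k, s k) = P := by
        ext x
        simp only [hsdef, hPdef, Set.mem_iUnion, Set.mem_inter_iff, Set.mem_preimage,
          Set.mem_Icc, Set.mem_Ioc]
        constructor
        · rintro ⟨k, h1, h2, h3⟩
          refine ⟨h1, lt_of_lt_of_le (by positivity) h2, h3⟩
        · rintro ⟨h1, h2, h3⟩
          obtain ⟨k, hk⟩ := exists_nat_gt (1 / u x)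
          refine ⟨k, h1, ?_, h3⟩
          rw [div_le_iff₀ (by positivity)]
          rw [div_lt_iff₀ h2] at hk
          nlinarith
      have hfi : IntegrableOn (fun x => ‖gradient u x‖ ^ (n:ℝ)) (⋃ k, s k) volume := by
        rw [hunion]
        exact hu.energy.mono_set (Set.inter_subset_left)
      have htend := tendsto_setIntegral_of_monotone hsm hmono hfi
      have hbd : ∀ k, (∫ x in s k, ‖gradient u x‖ ^ (n:ℝ)) ≤ 2*C₂ := by
        intro k
        have := keyEnergy hn hΩo hΩb hlam hu hpos hsol hbound
          (a := 1/((k:ℝ)+1)) (t := 1) (by positivity) (by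
            rw [div_le_one (by positivity)]
            have : (0:ℝ) ≤ (k:ℝ) := Nat.cast_nonneg k
            linarith)
        calc (∫ x in s k, ‖gradient u x‖ ^ (n:ℝ))
            ≤ (1+1)*C₂ := this
          _ = 2*C₂ := by ring
      have := le_of_tendsto' htend hbd
      rwa [hunion] at this
    have hsub : B₀ ⊆ Z0 ∪ P := by
      intro x hx
      rcases eq_or_lt_of_le (hpos x hx.1) with h0 | h0
      · exact Or.inl ⟨hx.1, by
          simp only [Set.mem_preimage, Set.mem_singleton_iff]
          exact h0.symm⟩
      · exact Or.inr ⟨hx.1, h0, le_of_lt hx.2⟩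
    have hdisjZP : Disjoint Z0 P := by
      rw [Set.disjoint_left]
      rintro x ⟨_, hx0⟩ ⟨_, hxP⟩
      simp only [Set.mem_preimage, Set.mem_singleton_iff] at hx0
      simp only [Set.mem_preimage, Set.mem_Ioc] at hxP
      rw [hx0] at hxP
      exact lt_irrefl 0 hxP.1
    calc (∫ x in B₀, ‖gradient u x‖ ^ (n:ℝ))
        ≤ ∫ x in Z0 ∪ P, ‖gradient u x‖ ^ (n:ℝ) := by
          refine setIntegral_mono_set
            (IntegrableOn.mono_set hu.energy (Set.union_subset (fun x hx => hx.1) (fun x hx => hx.1))) ?_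
            (HasSubset.Subset.eventuallyLE hsub)
          filter_upwards with x
          exact Real.rpow_nonneg (norm_nonneg _) _
      _ = (∫ x in Z0, ‖gradient u x‖ ^ (n:ℝ)) + ∫ x in P, ‖gradient u x‖ ^ (n:ℝ) :=
          setIntegral_union hdisjZP hmeasP
            (IntegrableOn.mono_set hu.energy (fun x hx => hx.1))
            (IntegrableOn.mono_set hu.energy (fun x hx => hx.1))
      _ ≤ 0 + 2*C₂ := by rw [hZ0zero]; exact add_le_add_right hPbound 0
      _ = 2*C₂ := by ring
  -- bound on the B₀ piece
  have hB₀piece : (∫ x in B₀, ‖gradient u x‖ ^ q) ≤ 2*C₂ + Vc := by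
    calc (∫ x in B₀, ‖gradient u x‖ ^ q)
        ≤ ∫ x in B₀, (‖gradient u x‖ ^ (n:ℝ) + 1) := by
          refine setIntegral_mono_on (IntegrableOn.mono_set hIq hB₀Ω)
            (IntegrableOn.mono_set (hu.energy.add (hIconst 1)) hB₀Ω) hmeasB₀ ?_
          intro x _
          exact hyoung1 _ (norm_nonneg _)
      _ = (∫ x in B₀, ‖gradient u x‖ ^ (n:ℝ)) + ∫ x in B₀, (1:ℝ) :=
          integral_add (IntegrableOn.mono_set hu.energy hB₀Ω) (IntegrableOn.mono_set (hIconst 1) hB₀Ω)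
      _ ≤ 2*C₂ + Vc := by
          refine add_le_add hB₀energy ?_
          rw [setIntegral_const, smul_eq_mul, mul_one]
          exact hvol_le B₀ hB₀Ω
  -- bound on the A j pieces, j ≥ 1
  have hAj : ∀ j : ℕ, 1 ≤ j → (∫ x in A j, ‖gradient u x‖ ^ q) ≤ K * (j:ℝ) ^ (-(2:ℝ)) := by
    intro j hj
    have hj1 : (1:ℝ) ≤ (j:ℝ) := by exact_mod_cast hj
    have hjpos : (0:ℝ) < (j:ℝ) := by linarith
    set ε : ℝ := (j:ℝ) ^ (-(3:ℝ)) with hεdef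
    have hε : 0 < ε := Real.rpow_pos_of_pos hjpos _
    set c : ℝ := ε ^ (-(q/((n:ℝ) - q))) with hcdef
    have hc0 : 0 ≤ c := Real.rpow_nonneg hε.le _
    -- Young pointwise
    have hstep1 : (∫ x in A j, ‖gradient u x‖ ^ q)
        ≤ ∫ x in A j, (ε * ‖gradient u x‖ ^ (n:ℝ) + c) := by
      refine setIntegral_mono_on (IntegrableOn.mono_set hIq (hAΩ j))
        (IntegrableOn.mono_set ((hu.energy.const_mul ε).add (hIconst c)) (hAΩ j)) (hmeasA j) ?_
      intro x _
      exact young_rpow (norm_nonneg _) hε hq0 (by exact_mod_cast hqn)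
    have hstep2 : (∫ x in A j, (ε * ‖gradient u x‖ ^ (n:ℝ) + c))
        = ε * (∫ x in A j, ‖gradient u x‖ ^ (n:ℝ)) + c * (volume (A j)).toReal := by
      rw [integral_add (IntegrableOn.mono_set (hu.energy.const_mul ε) (hAΩ j))
        (IntegrableOn.mono_set (hIconst c) (hAΩ j)), MeasureTheory.integral_const_mul, setIntegral_const, smul_eq_mul,
        mul_comm c]
      rfl
    -- energy term
    have hE : (∫ x in A j, ‖gradient u x‖ ^ (n:ℝ)) ≤ ((j:ℝ)+2)*C₂ := by
      have hsub : A j ⊆ Ω ∩ u ⁻¹' (Set.Icc (1:ℝ) ((j:ℝ)+1)) := by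
        rintro x ⟨h1, h2⟩
        simp only [Set.mem_preimage, Set.mem_Ico] at h2
        exact ⟨h1, ⟨le_trans hj1 h2.1, h2.2.le⟩⟩
      calc (∫ x in A j, ‖gradient u x‖ ^ (n:ℝ))
          ≤ ∫ x in Ω ∩ u ⁻¹' (Set.Icc (1:ℝ) ((j:ℝ)+1)), ‖gradient u x‖ ^ (n:ℝ) := by
            refine setIntegral_mono_set (IntegrableOn.mono_set hu.energy Set.inter_subset_left) ?_
              (HasSubset.Subset.eventuallyLE hsub)
            filter_upwards with x
            exact Real.rpow_nonneg (norm_nonneg _) _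
        _ ≤ ((j:ℝ)+1+1)*C₂ := keyEnergy hn hΩo hΩb hlam hu hpos hsol hbound
              (a := 1) one_pos (by linarith)
        _ = ((j:ℝ)+2)*C₂ := by ring
    have hterm1 : ε * (∫ x in A j, ‖gradient u x‖ ^ (n:ℝ)) ≤ 3*C₂ * (j:ℝ) ^ (-(2:ℝ)) := by
      have h1 : ε * (∫ x in A j, ‖gradient u x‖ ^ (n:ℝ)) ≤ ε * (((j:ℝ)+2)*C₂) := by
        apply mul_le_mul_of_nonneg_left _ hε.le
        exact hE
      have h2 : ε * (((j:ℝ)+2)*C₂) ≤ ε * ((3*(j:ℝ))*C₂) := by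
        apply mul_le_mul_of_nonneg_left _ hε.le
        apply mul_le_mul_of_nonneg_right _ hC₂.le
        linarith
      have h3 : ε * ((3*(j:ℝ))*C₂) = 3*C₂ * ((j:ℝ) ^ (-(3:ℝ)) * (j:ℝ)) := by
        rw [hεdef]; ring
      have h4 : (j:ℝ) ^ (-(3:ℝ)) * (j:ℝ) = (j:ℝ) ^ (-(2:ℝ)) := by
        nth_rewrite 2 [← Real.rpow_one (j:ℝ)]
        rw [← Real.rpow_add hjpos]
        norm_num
      calc ε * (∫ x in A j, ‖gradient u x‖ ^ (n:ℝ))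
          ≤ ε * (((j:ℝ)+2)*C₂) := h1
        _ ≤ ε * ((3*(j:ℝ))*C₂) := h2
        _ = 3*C₂ * ((j:ℝ) ^ (-(3:ℝ)) * (j:ℝ)) := h3
        _ = 3*C₂ * (j:ℝ) ^ (-(2:ℝ)) := by rw [h4]
    -- measure term
    have hcval : c = (j:ℝ) ^ (3*(q/((n:ℝ) - q))) := by
      rw [hcdef, hεdef, ← Real.rpow_mul hjpos.le]
      congr 1
      ring
    have hterm2 : c * (volume (A j)).toReal ≤ (D + Vc) * (j:ℝ) ^ (-(2:ℝ)) := by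
      rcases eq_or_lt_of_le hj with hj1' | hj2
      · -- j = 1
        have hjr : (j:ℝ) = 1 := by exact_mod_cast hj1'.symm
        have hc1 : c = 1 := by rw [hcval, hjr, Real.one_rpow]
        have hv : (volume (A j)).toReal ≤ Vc := hvol_le _ (hAΩ j)
        rw [hc1, one_mul, hjr, Real.one_rpow, mul_one]
        linarith
      · -- j ≥ 2
        have hj2' : (2:ℝ) ≤ (j:ℝ) := by exact_mod_cast hj2
        have hv1 : (volume (A j)).toReal ≤ (volume (Ω ∩ u ⁻¹' (Set.Ici (j:ℝ)))).toReal := by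
          apply ENNReal.toReal_mono
          · exact ((lt_of_le_of_lt (measure_mono
              ((Set.inter_subset_left).trans subset_closure)) hclos.measure_lt_top)).ne
          · apply measure_mono
            apply Set.inter_subset_inter_right
            apply Set.preimage_mono
            exact Set.Ico_subset_Ici_self
        have hv2 := hDbound lam u hlam hu hpos hsol hbound (j:ℝ) hj2'
        have hv : (volume (A j)).toReal ≤ D * (j:ℝ) ^ (-m) := hv1.trans hv2
        have he : 3*(q/((n:ℝ) - q)) ≤ 3*(n:ℝ)/((n:ℝ) - q) := by
          rw [mul_div_assoc]
          gcongr
        calc c * (volume (A j)).toReal ≤ c * (D * (j:ℝ) ^ (-m)) :=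
              mul_le_mul_of_nonneg_left hv hc0
          _ = D * ((j:ℝ) ^ (3*(q/((n:ℝ) - q))) * (j:ℝ) ^ (-m)) := by rw [hcval]; ring
          _ = D * (j:ℝ) ^ (3*(q/((n:ℝ) - q)) - m) := by
              rw [← Real.rpow_add hjpos]
              ring_nf
          _ ≤ D * (j:ℝ) ^ (-(2:ℝ)) := by
              apply mul_le_mul_of_nonneg_left _ hD0
              apply Real.rpow_le_rpow_of_exponent_le hj1
              rw [hmdef]
              linarith
          _ ≤ (D + Vc) * (j:ℝ) ^ (-(2:ℝ)) := by
              apply mul_le_mul_of_nonneg_right _ (Real.rpow_nonneg hjpos.le _)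
              linarith
    calc (∫ x in A j, ‖gradient u x‖ ^ q)
        ≤ ∫ x in A j, (ε * ‖gradient u x‖ ^ (n:ℝ) + c) := hstep1
      _ = ε * (∫ x in A j, ‖gradient u x‖ ^ (n:ℝ)) + c * (volume (A j)).toReal := hstep2
      _ ≤ 3*C₂ * (j:ℝ) ^ (-(2:ℝ)) + (D + Vc) * (j:ℝ) ^ (-(2:ℝ)) := add_le_add hterm1 hterm2
      _ = K * (j:ℝ) ^ (-(2:ℝ)) := by rw [hKdef]; ring
  -- decompose Ω
  set T : Finset ℕ := Finset.Ico 1 N with hTdef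
  have hcover : Ω = B₀ ∪ (⋃ j ∈ T, A j) := by
    ext x
    constructor
    · intro hx
      rcases lt_or_ge (u x) 1 with h | h
      · exact Or.inl ⟨hx, h⟩
      · right
        have hjT : ⌊u x⌋₊ ∈ T := by
          rw [hTdef, Finset.mem_Ico]
          exact ⟨Nat.le_floor (by exact_mod_cast h), (Nat.floor_lt (hpos x hx)).2 (huN x hx)⟩
        have hxA : x ∈ A ⌊u x⌋₊ :=
          ⟨hx, ⟨Nat.floor_le (hpos x hx), Nat.lt_floor_add_one (u x)⟩⟩
        exact Set.mem_biUnion hjT hxA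
    · intro hx
      rcases hx with h | h
      · exact h.1
      · obtain ⟨j, _, hj⟩ := Set.mem_iUnion₂.1 h
        exact hj.1
  have hdisj : Disjoint B₀ (⋃ j ∈ T, A j) := by
    rw [Set.disjoint_left]
    rintro x ⟨_, hxB⟩ hxU
    obtain ⟨j, hjT, hj⟩ := Set.mem_iUnion₂.1 hxU
    rw [hTdef, Finset.mem_Ico] at hjT
    have h1 : (1:ℝ) ≤ (j:ℝ) := by exact_mod_cast hjT.1
    have h2 : (j:ℝ) ≤ u x := hj.2.1
    simp only [Set.mem_preimage, Set.mem_Iio] at hxB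
    linarith
  have hpair : Set.Pairwise (↑T) (Function.onFun Disjoint A) := by
    intro j _ k _ hjk
    simp only [Function.onFun]
    rw [Set.disjoint_left]
    rintro x ⟨_, hxj⟩ ⟨_, hxk⟩
    simp only [Set.mem_preimage, Set.mem_Ico] at hxj hxk
    have h1 : (j:ℝ) < (k:ℝ)+1 := lt_of_le_of_lt hxj.1 hxk.2
    have h2 : (k:ℝ) < (j:ℝ)+1 := lt_of_le_of_lt hxk.1 hxj.2
    have h1' : j < k+1 := by exact_mod_cast h1
    have h2' : k < j+1 := by exact_mod_cast h2
    exact hjk (by omega)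
  have hUmeas : MeasurableSet (⋃ j ∈ T, A j) :=
    T.measurableSet_biUnion (fun j _ => hmeasA j)
  have hUsub : (⋃ j ∈ T, A j) ⊆ Ω := Set.iUnion₂_subset (fun j _ => hAΩ j)
  calc (∫ x in Ω, ‖gradient u x‖ ^ q)
      = ∫ x in B₀ ∪ (⋃ j ∈ T, A j), ‖gradient u x‖ ^ q := by rw [← hcover]
    _ = (∫ x in B₀, ‖gradient u x‖ ^ q) + ∫ x in ⋃ j ∈ T, A j, ‖gradient u x‖ ^ q :=
        setIntegral_union hdisj hUmeas (IntegrableOn.mono_set hIq hB₀Ω) (IntegrableOn.mono_set hIq hUsub)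
    _ = (∫ x in B₀, ‖gradient u x‖ ^ q) + ∑ j ∈ T, ∫ x in A j, ‖gradient u x‖ ^ q := by
        rw [integral_biUnion_finset T (fun j _ => hmeasA j) hpair
          (fun j _ => hIq.mono_set (hAΩ j))]
    _ ≤ (2*C₂ + Vc) + ∑ j ∈ T, K * (j:ℝ) ^ (-(2:ℝ)) := by
        refine add_le_add hB₀piece (Finset.sum_le_sum ?_)
        intro j hj
        rw [hTdef, Finset.mem_Ico] at hj
        exact hAj j hj.1
    _ = (2*C₂ + Vc) + K * ∑ j ∈ T, (j:ℝ) ^ (-(2:ℝ)) := by rw [Finset.mul_sum]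
    _ ≤ (2*C₂ + Vc) + K * Z := by
        refine add_le_add_right (mul_le_mul_of_nonneg_left ?_ hK0) _
        exact Summable.sum_le_tsum T (fun j _ => Real.rpow_nonneg (Nat.cast_nonneg j) _)
          hZsummable


end
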